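/- arXiv:1902.07802 — 3 statements merged into one kernel-verified Lean document; each statement's English description precedes it below -/
import Mathlib

section
/- (Elliptical potential lemma.) Let x_1, …, x_T ∈ ℝ^d satisfy ‖x_t‖₂ ≤ C_context for all t, and assume λ_min(I_d) ≥ max{1, C_context²} (i.e., C_context ≤ 1). Define A_0 = I_d and A_t = I_d + Σ_{τ=1}^t x_τ x_τᵀ. Then Σ_{t=1}^T ‖x_t‖²_{A_{t−1}⁻¹} ≤ 2 log( det(A_T)/det(I_d) ) ≤ 2 [ d log( (trace(I_d) + T C_context²)/d ) − log det(I_d) ]. -/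
open Matrix Finset

lemma epl_psd_vmv {d : ℕ} (v : Fin d → ℝ) : (vecMulVec v v).PosSemidef := by
  refine Matrix.PosSemidef.of_dotProduct_mulVec_nonneg ?_ ?_
  · ext i j
    simp [vecMulVec_apply, mul_comm]
  · intro y
    have h : vecMulVec v v *ᵥ y = (v ⬝ᵥ y) • v := by
      ext i
      simp [vecMulVec_apply, mulVec, dotProduct, Finset.mul_sum, mul_left_comm, mul_comm, mul_assoc]
    rw [star_trivial, h, dotProduct_smul]
    have hc : y ⬝ᵥ v = v ⬝ᵥ y := dotProduct_comm _ _
    rw [hc]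
    exact mul_self_nonneg _

lemma epl_psd_sum {d : ℕ} (x : ℕ → Fin d → ℝ) (t : ℕ) :
    (∑ τ ∈ Finset.range t, vecMulVec (x τ) (x τ)).PosSemidef := by
  induction t with
  | zero => simpa using Matrix.PosSemidef.zero
  | succ n ih =>
      rw [Finset.sum_range_succ]
      exact ih.add (epl_psd_vmv _)

lemma epl_quad_le {d : ℕ} (B : Matrix (Fin d) (Fin d) ℝ) (hB : B.PosSemidef) (v : Fin d → ℝ) :
    v ⬝ᵥ ((1 + B)⁻¹ *ᵥ v) ≤ v ⬝ᵥ v := by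
  have hM : (1 + B).PosDef := Matrix.PosDef.one.add_posSemidef hB
  set M : Matrix (Fin d) (Fin d) ℝ := 1 + B with hMdef
  have hdet : IsUnit M.det := isUnit_iff_ne_zero.2 hM.det_pos.ne'
  set y : Fin d → ℝ := M⁻¹ *ᵥ v with hy
  have hv : M *ᵥ y = v := by
    rw [hy, mulVec_mulVec, Matrix.mul_nonsing_inv _ hdet, one_mulVec]
  have h1 : 0 ≤ y ⬝ᵥ (B *ᵥ y) := by simpa [star_trivial] using hB.dotProduct_mulVec_nonneg y
  have h2 : 0 ≤ (B *ᵥ y) ⬝ᵥ (B *ᵥ y) := Finset.sum_nonneg fun i _ => mul_self_nonneg _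
  have hexp : v ⬝ᵥ v - v ⬝ᵥ y = y ⬝ᵥ (B *ᵥ y) + (B *ᵥ y) ⬝ᵥ (B *ᵥ y) := by
    rw [← hv, hMdef]
    simp only [add_mulVec, one_mulVec, add_dotProduct, dotProduct_add]
    have hcomm : (B *ᵥ y) ⬝ᵥ y = y ⬝ᵥ (B *ᵥ y) := dotProduct_comm _ _
    rw [hcomm]; ring
  have : v ⬝ᵥ y ≤ v ⬝ᵥ v := by linarith
  simpa [hy] using this

lemma epl_det_step {d : ℕ} (M : Matrix (Fin d) (Fin d) ℝ) (hdet : IsUnit M.det)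
    (u : Fin d → ℝ) :
    (M + vecMulVec u u).det = M.det * (1 + u ⬝ᵥ (M⁻¹ *ᵥ u)) := by
  rw [vecMulVec_eq Unit, Matrix.det_add_replicateCol_mul_replicateRow hdet]
  congr 1
  rw [det_unique]
  simp [Matrix.mul_apply, Matrix.replicateRow, Matrix.replicateCol, dotProduct, Matrix.mulVec,
    Finset.mul_sum, Finset.sum_mul]
  rw [Finset.sum_comm]
  exact Finset.sum_congr rfl fun i _ => Finset.sum_congr rfl fun j _ => by ring

lemma epl_key_scalar {u : ℝ} (h0 : 0 ≤ u) (h1 : u ≤ 1) : u ≤ 2 * Real.log (1 + u) := by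
  have hp : (0:ℝ) < 1 + u := by linarith
  have h := Real.log_le_sub_one_of_pos (show (0:ℝ) < (1+u)⁻¹ by positivity)
  rw [Real.log_inv] at h
  have hinv : (1+u)⁻¹ * (1+u) = 1 := inv_mul_cancel₀ hp.ne'
  nlinarith [mul_nonneg h0 (sub_nonneg.2 h1), Real.log_nonneg (by linarith : (1:ℝ) ≤ 1+u)]

lemma epl_trace_eq_sum_eigs {d : ℕ} {A : Matrix (Fin d) (Fin d) ℝ} (hA : A.IsHermitian) :
    A.trace = ∑ i, hA.eigenvalues i := by
  rw [hA.trace_eq_sum_eigenvalues]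
  simp

lemma epl_trace_vmv {d : ℕ} (v : Fin d → ℝ) : (vecMulVec v v).trace = v ⬝ᵥ v := by
  simp [Matrix.trace, Matrix.diag, vecMulVec_apply, dotProduct]

lemma epl_log_det_le {d : ℕ} {A : Matrix (Fin d) (Fin d) ℝ} (hP : A.PosDef)
    {c : ℝ} (hc : 0 < c) (htr : A.trace ≤ d * c) :
    Real.log A.det ≤ d * Real.log c := by
  have hH := hP.isHermitian
  have heig : ∀ i, 0 < hH.eigenvalues i := hP.eigenvalues_pos
  have hdet : A.det = ∏ i, hH.eigenvalues i := by
    rw [hH.det_eq_prod_eigenvalues]; norm_num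
  rw [hdet, Real.log_prod (fun i _ => (heig i).ne')]
  have hstep : ∀ i : Fin d, Real.log (hH.eigenvalues i) ≤
      Real.log c + (hH.eigenvalues i / c - 1) := by
    intro i
    have h := Real.log_le_sub_one_of_pos (div_pos (heig i) hc)
    rw [Real.log_div (heig i).ne' hc.ne'] at h
    linarith
  calc ∑ i, Real.log (hH.eigenvalues i)
      ≤ ∑ i : Fin d, (Real.log c + (hH.eigenvalues i / c - 1)) :=
        Finset.sum_le_sum fun i _ => hstep i
    _ = d * Real.log c + ((∑ i, hH.eigenvalues i) / c - d) := by
        rw [Finset.sum_add_distrib]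
        simp [Finset.sum_sub_distrib, Finset.sum_div, mul_comm]
    _ ≤ d * Real.log c := by
        have htr' : (∑ i, hH.eigenvalues i) ≤ d * c := by
          rw [← epl_trace_eq_sum_eigs hH]; exact htr
        have : (∑ i, hH.eigenvalues i) / c ≤ d := by
          rw [div_le_iff₀ hc]; exact htr'
        linarith

/-- **Elliptical potential lemma.**
Let `x_1, …, x_T ∈ ℝ^d` satisfy `‖x_t‖₂ ≤ C_context` for all `t`, with
`λ_min(I_d) ≥ max{1, C_context²}` (i.e. `C_context ≤ 1`).  With `A_0 = I_d` and
`A_t = I_d + Σ_{τ≤t} x_τ x_τᵀ`, we have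
`Σ_{t=1}^T ‖x_t‖²_{A_{t−1}⁻¹} ≤ 2 log(det(A_T)/det(I_d))
  ≤ 2 [d log((trace(I_d) + T C_context²)/d) − log det(I_d)]`.
(Here the slots are indexed `t = 0, …, T−1`, so that `A t` plays the role of
`A_{t−1}` for the context `x t`.) -/
theorem elliptical_potential_lemma
    {d : ℕ} (hd : 0 < d) (T : ℕ) (Ccontext : ℝ)
    (hC : Ccontext ≤ 1)
    (x : ℕ → Fin d → ℝ)
    (hx : ∀ t, Real.sqrt (x t ⬝ᵥ x t) ≤ Ccontext)
    (A : ℕ → Matrix (Fin d) (Fin d) ℝ)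
    (hA : ∀ t, A t = 1 + ∑ τ ∈ Finset.range t, vecMulVec (x τ) (x τ)) :
    (∑ t ∈ Finset.range T, x t ⬝ᵥ ((A t)⁻¹.mulVec (x t)))
        ≤ 2 * Real.log ((A T).det / (1 : Matrix (Fin d) (Fin d) ℝ).det)
      ∧ 2 * Real.log ((A T).det / (1 : Matrix (Fin d) (Fin d) ℝ).det)
        ≤ 2 * ((d : ℝ) *
              Real.log (((1 : Matrix (Fin d) (Fin d) ℝ).trace + T * Ccontext ^ 2) / d)
            - Real.log (1 : Matrix (Fin d) (Fin d) ℝ).det) := by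
  have hC0 : 0 ≤ Ccontext := (Real.sqrt_nonneg _).trans (hx 0)
  have hxx0 : ∀ t, 0 ≤ x t ⬝ᵥ x t := fun t => Finset.sum_nonneg fun i _ => mul_self_nonneg _
  have hxxC : ∀ t, x t ⬝ᵥ x t ≤ Ccontext ^ 2 := by
    intro t
    have h := Real.sq_sqrt (hxx0 t)
    calc x t ⬝ᵥ x t = Real.sqrt (x t ⬝ᵥ x t) ^ 2 := h.symm
      _ ≤ Ccontext ^ 2 := pow_le_pow_left₀ (Real.sqrt_nonneg _) (hx t) 2
  have hxx1 : ∀ t, x t ⬝ᵥ x t ≤ 1 := by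
    intro t
    have : Ccontext ^ 2 ≤ 1 := by nlinarith
    linarith [hxxC t]
  have hP : ∀ t, (A t).PosDef := by
    intro t
    rw [hA t]
    exact Matrix.PosDef.one.add_posSemidef (epl_psd_sum x t)
  set u : ℕ → ℝ := fun t => x t ⬝ᵥ ((A t)⁻¹ *ᵥ x t) with hu
  have hu0 : ∀ t, 0 ≤ u t := by
    intro t
    have := ((hP t).inv).posSemidef.dotProduct_mulVec_nonneg (x t)
    simpa [star_trivial, hu] using this
  have hu1 : ∀ t, u t ≤ 1 := by
    intro t
    have h := epl_quad_le _ (epl_psd_sum x t) (x t)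
    rw [← hA t] at h
    exact h.trans (hxx1 t)
  have hdetstep : ∀ t, (A (t+1)).det = (A t).det * (1 + u t) := by
    intro t
    have hAt : A (t+1) = A t + vecMulVec (x t) (x t) := by
      rw [hA, hA, Finset.sum_range_succ, add_assoc]
    rw [hAt, epl_det_step _ (isUnit_iff_ne_zero.2 (hP t).det_pos.ne') _]
  have hlog : ∀ n, Real.log (A n).det = ∑ t ∈ Finset.range n, Real.log (1 + u t) := by
    intro n
    induction n with
    | zero =>
        have : A 0 = 1 := by rw [hA]; simp
        simp [this]
    | succ n ih =>
        have hpos : (0:ℝ) < 1 + u n := by linarith [hu0 n]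
        rw [hdetstep n, Real.log_mul (hP n).det_pos.ne' hpos.ne', ih,
          Finset.sum_range_succ]
  have hdiv : (A T).det / (1 : Matrix (Fin d) (Fin d) ℝ).det = (A T).det := by
    rw [Matrix.det_one, div_one]
  constructor
  · rw [hdiv, hlog T, Finset.mul_sum]
    exact Finset.sum_le_sum fun t _ => epl_key_scalar (hu0 t) (hu1 t)
  · rw [hdiv, Matrix.det_one, Real.log_one, Matrix.trace_one]
    have hcard : (Fintype.card (Fin d) : ℝ) = (d : ℝ) := by simp
    rw [hcard]
    have hdpos : (0:ℝ) < d := by exact_mod_cast hd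
    have hc : (0:ℝ) < ((d : ℝ) + T * Ccontext ^ 2) / d := by positivity
    have htr : (A T).trace ≤ d * (((d : ℝ) + T * Ccontext ^ 2) / d) := by
      rw [mul_div_cancel₀ _ hdpos.ne']
      rw [hA T, Matrix.trace_add, Matrix.trace_one, Matrix.trace_sum]
      have hsum : ∑ τ ∈ Finset.range T, (vecMulVec (x τ) (x τ)).trace
          ≤ T * Ccontext ^ 2 := by
        calc ∑ τ ∈ Finset.range T, (vecMulVec (x τ) (x τ)).trace
            ≤ ∑ τ ∈ Finset.range T, Ccontext ^ 2 := by
              refine Finset.sum_le_sum fun τ _ => ?_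
              rw [epl_trace_vmv]
              exact hxxC τ
          _ = T * Ccontext ^ 2 := by
              rw [Finset.sum_const, Finset.card_range, nsmul_eq_mul]
      have : (Fintype.card (Fin d) : ℝ) = (d : ℝ) := by simp
      rw [this]
      linarith
    have := epl_log_det_le (hP T) hc htr
    linarith
end

section
/- Let x_{(1)}, …, x_{(N)} ∈ ℝ^d be fixed vectors, let m_1, …, m_N be nonnegative integers, and let A = I_d + Σ_{i=1}^N m_i · x_{(i)} x_{(i)}ᵀ. Then for every n ∈ {1, …, N} with m_n ≥ 1, ‖x_{(n)}‖_{A⁻¹} ≤ √(d / m_n); equivalently, m_n · x_{(n)}ᵀ A⁻¹ x_{(n)} ≤ d. -/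
open Matrix Finset

lemma vecMulVec_mulVec' {d : ℕ} (a b y : Fin d → ℝ) :
    (vecMulVec a b).mulVec y = (b ⬝ᵥ y) • a := by
  ext i
  simp [Matrix.mulVec, Matrix.vecMulVec_apply, dotProduct, Finset.mul_sum, mul_assoc,
    mul_comm, mul_left_comm]

lemma sum_mulVec' {d N : ℕ} (M : Fin N → Matrix (Fin d) (Fin d) ℝ) (y : Fin d → ℝ) :
    (∑ i, M i).mulVec y = ∑ i, (M i).mulVec y := by
  ext j
  simp only [Matrix.mulVec, dotProduct, Finset.sum_apply, Matrix.sum_apply, Finset.sum_mul]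
  rw [Finset.sum_comm]

lemma dotProduct_sum' {d N : ℕ} (y : Fin d → ℝ) (w : Fin N → Fin d → ℝ) :
    y ⬝ᵥ (∑ i, w i) = ∑ i, y ⬝ᵥ w i := by
  simp only [dotProduct, Finset.sum_apply, Finset.mul_sum]
  exact Finset.sum_comm

lemma quad_form_eq {d N : ℕ} (x : Fin N → Fin d → ℝ) (m : Fin N → ℕ)
    (A : Matrix (Fin d) (Fin d) ℝ)
    (hA : A = 1 + ∑ i, (m i : ℝ) • vecMulVec (x i) (x i)) (y : Fin d → ℝ) :
    y ⬝ᵥ A.mulVec y = y ⬝ᵥ y + ∑ i, (m i : ℝ) * (x i ⬝ᵥ y) ^ 2 := by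
  subst hA
  rw [Matrix.add_mulVec, Matrix.one_mulVec, dotProduct_add]
  congr 1
  rw [sum_mulVec', dotProduct_sum']
  refine Finset.sum_congr rfl fun i _ => ?_
  rw [Matrix.smul_mulVec, vecMulVec_mulVec']
  simp only [dotProduct_smul, smul_eq_mul]
  rw [dotProduct_comm]
  ring

/-- Let `x_{(1)}, …, x_{(N)} ∈ ℝ^d`, let `m_1, …, m_N` be nonnegative integers, and let
`A = I_d + Σ_{i=1}^N m_i · x_{(i)} x_{(i)}ᵀ`.  Then for every `n` with `m_n ≥ 1`,
`‖x_{(n)}‖_{A⁻¹} ≤ √(d / m_n)`; equivalently, `m_n · x_{(n)}ᵀ A⁻¹ x_{(n)} ≤ d`. -/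
theorem ucb_width_bound_from_pull_counts
    {d N : ℕ} (x : Fin N → Fin d → ℝ) (m : Fin N → ℕ)
    (A : Matrix (Fin d) (Fin d) ℝ)
    (hA : A = 1 + ∑ i, (m i : ℝ) • vecMulVec (x i) (x i))
    (n : Fin N) (hm : 1 ≤ m n) :
    Real.sqrt (x n ⬝ᵥ A⁻¹.mulVec (x n)) ≤ Real.sqrt ((d : ℝ) / m n)
      ∧ (m n : ℝ) * (x n ⬝ᵥ A⁻¹.mulVec (x n)) ≤ (d : ℝ) := by
  have hq := quad_form_eq x m A hA
  -- A is positive definite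
  have hApd : A.PosDef := by
    rw [Matrix.posDef_iff_dotProduct_mulVec]
    constructor
    · subst hA
      unfold Matrix.IsHermitian
      rw [conjTranspose_add, conjTranspose_one, conjTranspose_sum]
      congr 1
      refine Finset.sum_congr rfl fun i _ => ?_
      ext a b
      simp [Matrix.conjTranspose_apply, Matrix.vecMulVec_apply, mul_comm]
    · intro y hy
      have h0 : (0:ℝ) < y ⬝ᵥ y := by
        rcases (dotProduct_self_star_nonneg y).lt_or_eq with h | h
        · simpa [star_trivial] using h
        · exact absurd (dotProduct_self_star_eq_zero.mp h.symm) hy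
      have hsum : (0:ℝ) ≤ ∑ i, (m i : ℝ) * (x i ⬝ᵥ y) ^ 2 :=
        Finset.sum_nonneg fun i _ => by positivity
      simpa [star_trivial, hq y] using add_pos_of_pos_of_nonneg h0 hsum
  have hAinv : A⁻¹.PosDef := hApd.inv
  set s := x n ⬝ᵥ A⁻¹.mulVec (x n) with hs
  have hs0 : 0 ≤ s := by
    simpa [star_trivial] using hAinv.posSemidef.dotProduct_mulVec_nonneg (x n)
  set v := A⁻¹.mulVec (x n) with hv
  have hAv : A.mulVec v = x n := by
    rw [hv, Matrix.mulVec_mulVec, Matrix.mul_nonsing_inv A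
      (isUnit_iff_ne_zero.mpr hApd.det_pos.ne'), Matrix.one_mulVec]
  have hxv : x n ⬝ᵥ v = s := rfl
  have hvx : v ⬝ᵥ x n = s := by rw [dotProduct_comm, hxv]
  -- key: m n * s^2 ≤ s
  have hkey : (m n : ℝ) * s ^ 2 ≤ s := by
    have h1 : v ⬝ᵥ A.mulVec v = s := by rw [hAv, hvx]
    have h2 := hq v
    rw [h1] at h2
    have hvv : (0:ℝ) ≤ v ⬝ᵥ v := by
      simpa [star_trivial] using dotProduct_self_star_nonneg v
    have hsingle : (m n : ℝ) * (x n ⬝ᵥ v) ^ 2 ≤ ∑ i, (m i : ℝ) * (x i ⬝ᵥ v) ^ 2 :=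
      Finset.single_le_sum (f := fun i => (m i : ℝ) * (x i ⬝ᵥ v) ^ 2)
        (fun i _ => by positivity) (Finset.mem_univ n)
    rw [hxv] at hsingle
    linarith
  -- second conclusion
  have h2 : (m n : ℝ) * s ≤ (d : ℝ) := by
    rcases hs0.lt_or_eq with hpos | hzero
    · have hd : 1 ≤ d := by
        rcases Nat.eq_zero_or_pos d with hd0 | hd0
        · exfalso
          have : s = 0 := by
            rw [hs]
            subst hd0
            simp [dotProduct]
          exact absurd this hpos.ne'
        · exact hd0
      have hms : (m n : ℝ) * s ≤ 1 := by
        have := hkey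
        rw [pow_two, ← mul_assoc] at this
        exact le_of_mul_le_mul_right (by linarith) hpos
      calc (m n : ℝ) * s ≤ 1 := hms
        _ ≤ (d : ℝ) := by exact_mod_cast hd
    · rw [← hzero, mul_zero]; positivity
  refine ⟨?_, h2⟩
  apply Real.sqrt_le_sqrt
  rw [le_div_iff₀ (by exact_mod_cast hm : (0:ℝ) < m n)]
  linarith [h2]
end

section
/- (Sufficient condition for selecting the optimal context under pure exploitation.) Let A ∈ ℝ^{d×d} be positive definite, let α > 0, and let θ, θ⋆ ∈ ℝ^d satisfy ‖θ − θ⋆‖_A ≤ α. Let x⋆, x_{(2)}, …, x_{(N)} ∈ ℝ^d be vectors such that for every n ∈ {2, …, N}, ⟨x⋆, θ⋆⟩ − ⟨x_{(n)}, θ⋆⟩ > α ‖x⋆‖_{A⁻¹} + α ‖x_{(n)}‖_{A⁻¹}. Then ⟨x⋆, θ⟩ > ⟨x_{(n)}, θ⟩ for every n ∈ {2, …, N}; consequently, in a slot of AdaLinUCB where L̃_t = 1 (pure exploitation of the estimate θ = θ_{t−1} with A = A_{t−1}), the arm with the optimal context x⋆ is pulled and the one-slot nominal regret is zero. -/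
open Matrix

private lemma cs_posdef {d : ℕ} {A : Matrix (Fin d) (Fin d) ℝ} (hA : A.PosDef)
    (u w : Fin d → ℝ) :
    (u ⬝ᵥ A.mulVec w) ^ 2 ≤ (u ⬝ᵥ A.mulVec u) * (w ⬝ᵥ A.mulVec w) := by
  have hsymm : Aᵀ = A := hA.isHermitian.eq
  have hBsymm : ∀ a b : Fin d → ℝ, a ⬝ᵥ A.mulVec b = b ⬝ᵥ A.mulVec a := by
    intro a b
    rw [dotProduct_mulVec, ← mulVec_transpose, hsymm, dotProduct_comm]
  have key : ∀ t : ℝ,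
      0 ≤ (w ⬝ᵥ A.mulVec w) * (t * t) + (2 * (u ⬝ᵥ A.mulVec w)) * t
          + (u ⬝ᵥ A.mulVec u) := by
    intro t
    have h := hA.posSemidef.dotProduct_mulVec_nonneg (u + t • w)
    have expand : (u + t • w) ⬝ᵥ A.mulVec (u + t • w)
        = (w ⬝ᵥ A.mulVec w) * (t * t) + (2 * (u ⬝ᵥ A.mulVec w)) * t
          + (u ⬝ᵥ A.mulVec u) := by
      simp only [mulVec_add, mulVec_smul, add_dotProduct, smul_dotProduct,
        dotProduct_add, dotProduct_smul, hBsymm w u, smul_eq_mul]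
      ring
    linarith [expand ▸ h]
  have hd := discrim_le_zero key
  rw [discrim] at hd
  nlinarith [hd]

/-- **Sufficient condition for selecting the optimal context under pure exploitation.**
Let `A ∈ ℝ^{d×d}` be positive definite, `α > 0`, and let `θ, θ⋆ ∈ ℝ^d` satisfy
`‖θ − θ⋆‖_A ≤ α`.  Let `x⋆, x_{(2)}, …, x_{(N)} ∈ ℝ^d` (the suboptimal context
values indexed by `Fin N`) be such that for every `n`,
`⟨x⋆, θ⋆⟩ − ⟨x_{(n)}, θ⋆⟩ > α ‖x⋆‖_{A⁻¹} + α ‖x_{(n)}‖_{A⁻¹}`.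
Then `⟨x⋆, θ⟩ > ⟨x_{(n)}, θ⟩` for every `n`; consequently, in a pure-exploitation
slot of AdaLinUCB (where the index of a context `x` is `⟨x, θ⟩`), the arm with
the optimal context `x⋆` is pulled and the one-slot nominal regret is zero. -/
theorem pure_exploitation_selects_optimal_context
    {d N : ℕ} (A : Matrix (Fin d) (Fin d) ℝ) (hA : A.PosDef)
    (α : ℝ) (hα : 0 < α) (θ θstar : Fin d → ℝ)
    (hconf : Real.sqrt ((θ - θstar) ⬝ᵥ A.mulVec (θ - θstar)) ≤ α)
    (xstar : Fin d → ℝ) (xsub : Fin N → Fin d → ℝ)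
    (hgap : ∀ n : Fin N,
      α * Real.sqrt (xstar ⬝ᵥ A⁻¹.mulVec xstar)
          + α * Real.sqrt (xsub n ⬝ᵥ A⁻¹.mulVec (xsub n))
        < xstar ⬝ᵥ θstar - xsub n ⬝ᵥ θstar) :
    ∀ n : Fin N, xsub n ⬝ᵥ θ < xstar ⬝ᵥ θ := by
  intro n
  set v : Fin d → ℝ := θ - θstar with hv
  haveI : Invertible A := hA.isUnit.invertible
  have hdet : IsUnit A.det := hA.det_pos.ne'.isUnit
  have hsymm : Aᵀ = A := hA.isHermitian.eq
  have hinvsymm : A⁻¹ᵀ = A⁻¹ := by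
    rw [transpose_nonsing_inv, hsymm]
  have hAinv : A⁻¹.PosDef := hA.inv
  -- key bound: |x ⬝ᵥ v| ≤ sqrt(x A⁻¹ x) * α
  have hvAv0 : 0 ≤ v ⬝ᵥ A.mulVec v := hA.posSemidef.dotProduct_mulVec_nonneg v
  have hvα : Real.sqrt (v ⬝ᵥ A.mulVec v) ≤ α := hconf
  have bound : ∀ x : Fin d → ℝ,
      |x ⬝ᵥ v| ≤ Real.sqrt (x ⬝ᵥ A⁻¹.mulVec x) * α := by
    intro x
    have hrewrite : (A⁻¹.mulVec x) ⬝ᵥ A.mulVec v = x ⬝ᵥ v := by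
      rw [dotProduct_mulVec (A⁻¹.mulVec x), vecMul_mulVec, hinvsymm,
        A.nonsing_inv_mul hdet, vecMul_one]
    have huu : (A⁻¹.mulVec x) ⬝ᵥ A.mulVec (A⁻¹.mulVec x) = x ⬝ᵥ A⁻¹.mulVec x := by
      rw [mulVec_mulVec, A.mul_nonsing_inv hdet, one_mulVec,
        dotProduct_mulVec, ← mulVec_transpose, hinvsymm, dotProduct_comm]
    have hcs := cs_posdef hA (A⁻¹.mulVec x) v
    rw [hrewrite, huu] at hcs
    have hx0 : 0 ≤ x ⬝ᵥ A⁻¹.mulVec x := hAinv.posSemidef.dotProduct_mulVec_nonneg x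
    have habs : |x ⬝ᵥ v| = Real.sqrt ((x ⬝ᵥ v) ^ 2) := by
      rw [Real.sqrt_sq_eq_abs]
    rw [habs]
    calc Real.sqrt ((x ⬝ᵥ v) ^ 2)
        ≤ Real.sqrt ((x ⬝ᵥ A⁻¹.mulVec x) * (v ⬝ᵥ A.mulVec v)) :=
          Real.sqrt_le_sqrt hcs
      _ = Real.sqrt (x ⬝ᵥ A⁻¹.mulVec x) * Real.sqrt (v ⬝ᵥ A.mulVec v) :=
          Real.sqrt_mul hx0 _
      _ ≤ Real.sqrt (x ⬝ᵥ A⁻¹.mulVec x) * α :=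
          mul_le_mul_of_nonneg_left hvα (Real.sqrt_nonneg _)
  have b1 := bound xstar
  have b2 := bound (xsub n)
  have hg := hgap n
  have e1 : xstar ⬝ᵥ θ = xstar ⬝ᵥ θstar + xstar ⬝ᵥ v := by
    rw [hv, dotProduct_sub]; ring
  have e2 : xsub n ⬝ᵥ θ = xsub n ⬝ᵥ θstar + xsub n ⬝ᵥ v := by
    rw [hv, dotProduct_sub]; ring
  have a1 := abs_le.mp b1
  have a2 := abs_le.mp b2
  rw [e1, e2]
  nlinarith [a1.1, a1.2, a2.1, a2.2]
end
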